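/- Under the droplet dynamics dRᵢ/dt = -1/Rᵢ² + ū/Rᵢ (all radii positive) with ū = N/(Σᵢ Rᵢ), the energy F = Σᵢ ½Rᵢ² satisfies dF/dt = -Σᵢ (1/Rᵢ)·(1 - ū·Rᵢ)² ≤ 0. -/

import Mathlib

open Finset

/-- Under the droplet dynamics `dRᵢ/dt = -1/Rᵢ² + ū/Rᵢ` (all radii positive)
with `ū = N/(Σᵢ Rᵢ)`, the energy `F = Σᵢ ½Rᵢ²` satisfies
`dF/dt = -Σᵢ (1/Rᵢ)·(1 - ū·Rᵢ)² ≤ 0`. -/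
theorem droplet_energy_dissipation (N : ℕ) (R : Fin N → ℝ → ℝ) (u : ℝ → ℝ)
    (hu : ∀ s, u s = (N : ℝ) / ∑ j, R j s)
    (t : ℝ) (hpos : ∀ i, 0 < R i t)
    (hode : ∀ i, HasDerivAt (R i) (-1 / (R i t) ^ 2 + u t / R i t) t) :
    HasDerivAt (fun s => ∑ i, (1 / 2) * (R i s) ^ 2)
        (-∑ i, (1 / R i t) * (1 - u t * R i t) ^ 2) t ∧
      (-∑ i, (1 / R i t) * (1 - u t * R i t) ^ 2) ≤ 0 := by
  constructor
  · have hd : HasDerivAt (fun s => ∑ i, (1 / 2) * (R i s) ^ 2)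
        (∑ i, (-1 / R i t + u t)) t := by
      apply HasDerivAt.fun_sum
      intro i _
      have h := ((hode i).fun_pow 2).const_mul (1/2 : ℝ)
      have hRi := (hpos i).ne'
      convert h using 1
      · rfl
      field_simp
      ring
    convert hd using 1
    rcases Nat.eq_zero_or_pos N with hN | hN
    · subst hN; simp
    have hS : 0 < ∑ j, R j t := Finset.sum_pos (fun j _ => hpos j) (by
      simpa using Finset.univ_nonempty_iff.mpr ⟨⟨0, hN⟩⟩)
    have huS : u t * (∑ j, R j t) = N := by
      rw [hu]; field_simp
    have e2 : ∀ i : Fin N, (1 / R i t) * (1 - u t * R i t) ^ 2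
        = 1 / R i t - 2 * u t + u t ^ 2 * R i t := by
      intro i
      have hRi := (hpos i).ne'
      field_simp
      ring
    have e1 : ∀ i : Fin N, (-1 / R i t + u t) = -(1 / R i t) + u t := by
      intro i; ring
    rw [Finset.sum_congr rfl (fun i _ => e2 i), Finset.sum_congr rfl (fun i _ => e1 i)]
    have h2 : u t ^ 2 * (∑ j, R j t) = u t * N := by
      rw [pow_two, mul_assoc, huS]
    simp only [Finset.sum_add_distrib, Finset.sum_sub_distrib, ← Finset.mul_sum,
      Finset.sum_neg_distrib, Finset.sum_const, Finset.card_univ, Fintype.card_fin,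
      nsmul_eq_mul, h2]
    ring
  · apply neg_nonpos_of_nonneg
    apply Finset.sum_nonneg
    intro i _
    have := hpos i
    positivity
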